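/- Let τ be a real number with 2 < τ < 3, let 0 < ε ≤ 1, and let n ≥ 1 be a real number with εn ≥ 1. Then ∫₁^{εn} x^{2−τ} ( ∫₁^{εn/x} y^{2−τ} dy ) dx ≤ (εn)^{3−τ} · log(n) / (3 − τ). -/
import Mathlib


open MeasureTheory intervalIntegral

/-- Explicit bound from the paper's Lemma 6.1 (minor contributions, Range I):
contribution of pairs with degree product below `εn`. -/
theorem stmt_18 (τ ε n : ℝ) (hτ2 : 2 < τ) (hτ3 : τ < 3) (hε0 : 0 < ε)
    (hε1 : ε ≤ 1) (hn : 1 ≤ n) (hεn : 1 ≤ ε * n) :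
    (∫ x in (1 : ℝ)..(ε * n), x ^ (2 - τ) * ∫ y in (1 : ℝ)..(ε * n / x), y ^ (2 - τ))
      ≤ (ε * n) ^ (3 - τ) * Real.log n / (3 - τ) := by
  set c := ε * n with hc
  have hτ : (0:ℝ) < 3 - τ := by linarith
  have hr : (-1:ℝ) < 2 - τ := by linarith
  have hc0 : (0:ℝ) < c := lt_of_lt_of_le one_pos hεn
  have huIcc : Set.uIcc (1:ℝ) c = Set.Icc 1 c := Set.uIcc_of_le hεn
  have hcongr : ∀ x ∈ Set.uIcc (1:ℝ) c,
      x ^ (2-τ) * ∫ y in (1:ℝ)..(c/x), y ^ (2-τ)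
        = x ^ (2-τ) * (((c/x) ^ (3-τ) - 1)/(3-τ)) := by
    intro x hx
    rw [integral_rpow (Or.inl hr), Real.one_rpow, show (2-τ+1) = 3-τ by ring]
  rw [intervalIntegral.integral_congr hcongr]
  have hmono : (∫ x in (1:ℝ)..c, x ^ (2-τ) * (((c/x) ^ (3-τ) - 1)/(3-τ)))
      ≤ ∫ x in (1:ℝ)..c, (c ^ (3-τ)/(3-τ)) * x⁻¹ := by
    apply intervalIntegral.integral_mono_on hεn
    · apply ContinuousOn.intervalIntegrable
      rw [huIcc]
      apply ContinuousOn.mul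
      · exact (continuousOn_id.rpow_const (fun x hx =>
          Or.inl (by have := hx.1; intro h; simp only [id_eq] at h; linarith)))
      · apply ContinuousOn.div_const
        apply ContinuousOn.sub _ continuousOn_const
        apply ContinuousOn.rpow_const
        · exact continuousOn_const.div continuousOn_id
            (fun x hx => by have := hx.1; positivity)
        · intro x hx
          exact Or.inr (le_of_lt hτ)
    · apply ContinuousOn.intervalIntegrable
      rw [huIcc]
      exact continuousOn_const.mul (continuousOn_id.inv₀
        (fun x hx => by have := hx.1; positivity))
    · intro x hx
      obtain ⟨hx1, hxc⟩ := hx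
      have hx0 : (0:ℝ) < x := lt_of_lt_of_le one_pos hx1
      have hdiv : (c/x) ^ (3-τ) = c ^ (3-τ) / x ^ (3-τ) :=
        Real.div_rpow hc0.le hx0.le _
      rw [hdiv]
      have key : x ^ (2-τ) * (c ^ (3-τ) / x ^ (3-τ)) = c ^ (3-τ) * x⁻¹ := by
        rw [mul_div_assoc', mul_comm, mul_div_assoc, ← Real.rpow_sub hx0,
          show (2-τ-(3-τ)) = (-1:ℝ) by ring, Real.rpow_neg_one]
      have h1 : x ^ (2-τ) * ((c ^ (3-τ) / x ^ (3-τ) - 1)/(3-τ))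
          ≤ x ^ (2-τ) * ((c ^ (3-τ) / x ^ (3-τ))/(3-τ)) := by
        apply mul_le_mul_of_nonneg_left _ (Real.rpow_nonneg hx0.le _)
        apply div_le_div_of_nonneg_right _ hτ.le
        linarith
      calc x ^ (2-τ) * ((c ^ (3-τ) / x ^ (3-τ) - 1)/(3-τ))
          ≤ x ^ (2-τ) * ((c ^ (3-τ) / x ^ (3-τ))/(3-τ)) := h1
        _ = c ^ (3-τ)/(3-τ) * x⁻¹ := by
            rw [mul_div_assoc', key]; ring
  refine hmono.trans ?_
  rw [intervalIntegral.integral_const_mul, integral_inv (by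
    rw [huIcc]; intro h; exact absurd h.1 (by norm_num))]
  rw [div_one]
  have hlog : Real.log c ≤ Real.log n := by
    apply Real.log_le_log hc0
    calc c = ε * n := hc
      _ ≤ 1 * n := by nlinarith
      _ = n := one_mul n
  have hpow : (0:ℝ) ≤ c ^ (3-τ) := Real.rpow_nonneg hc0.le _
  rw [mul_div_assoc, div_mul_eq_mul_div, mul_div_assoc]
  apply mul_le_mul_of_nonneg_left _ hpow
  apply div_le_div_of_nonneg_right hlog hτ.le
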